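/- arXiv:1805.08753 — 9 statements merged into one kernel-verified Lean document; each statement's English description precedes it below -/
import Mathlib

section
/- If (A, μ) is a totally associative ternary algebra (i.e., μ(μ(x₁,x₂,x₃),x₄,x₅) = μ(x₁,μ(x₂,x₃,x₄),x₅) = μ(x₁,x₂,μ(x₃,x₄,x₅)) for all xᵢ), and ρ : A → A is an algebra endomorphism (ρ(μ(x,y,z)) = μ(ρx,ρy,ρz)), then (A, μ_ρ, ρ, ρ) with μ_ρ = ρ ∘ μ is a totally hom-associative ternary algebra, i.e., μ_ρ(μ_ρ(x₁,x₂,x₃), ρ(x₄), ρ(x₅)) = μ_ρ(ρ(x₁), μ_ρ(x₂,x₃,x₄), ρ(x₅)) = μ_ρ(ρ(x₁), ρ(x₂), μ_ρ(x₃,x₄,x₅)). -/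
/-- Twisting a totally associative ternary algebra by an endomorphism `ρ`
yields a totally hom-associative ternary algebra `(A, ρ ∘ μ, ρ, ρ)`. -/
theorem stmt0 {K A : Type*} [Field K] [CharZero K] [AddCommGroup A] [Module K A]
    (μ : A →ₗ[K] A →ₗ[K] A →ₗ[K] A)
    (htot : ∀ x₁ x₂ x₃ x₄ x₅ : A,
      μ (μ x₁ x₂ x₃) x₄ x₅ = μ x₁ (μ x₂ x₃ x₄) x₅ ∧
      μ x₁ (μ x₂ x₃ x₄) x₅ = μ x₁ x₂ (μ x₃ x₄ x₅))
    (ρ : A →ₗ[K] A)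
    (hρ : ∀ x y z : A, ρ (μ x y z) = μ (ρ x) (ρ y) (ρ z)) :
    ∀ x₁ x₂ x₃ x₄ x₅ : A,
      ρ (μ (ρ (μ x₁ x₂ x₃)) (ρ x₄) (ρ x₅)) = ρ (μ (ρ x₁) (ρ (μ x₂ x₃ x₄)) (ρ x₅)) ∧
      ρ (μ (ρ x₁) (ρ (μ x₂ x₃ x₄)) (ρ x₅)) = ρ (μ (ρ x₁) (ρ x₂) (ρ (μ x₃ x₄ x₅))) := by
  intro x₁ x₂ x₃ x₄ x₅
  constructor <;>
    rw [← hρ, ← hρ]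
  · rw [(htot x₁ x₂ x₃ x₄ x₅).1]
  · rw [(htot x₁ x₂ x₃ x₄ x₅).2]
end

section
/- If (A, μ) is a partially associative ternary algebra (i.e., μ(μ(x₁,x₂,x₃),x₄,x₅) + μ(x₁,μ(x₂,x₃,x₄),x₅) + μ(x₁,x₂,μ(x₃,x₄,x₅)) = 0 for all xᵢ), and ρ : A → A is an algebra endomorphism, then (A, ρ ∘ μ, ρ, ρ) is a partially hom-associative ternary algebra: (ρ∘μ)((ρ∘μ)(x₁,x₂,x₃), ρ(x₄), ρ(x₅)) + (ρ∘μ)(ρ(x₁), (ρ∘μ)(x₂,x₃,x₄), ρ(x₅)) + (ρ∘μ)(ρ(x₁), ρ(x₂), (ρ∘μ)(x₃,x₄,x₅)) = 0. -/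
/-- Twisting a partially associative ternary algebra by an endomorphism `ρ`
yields a partially hom-associative ternary algebra `(A, ρ ∘ μ, ρ, ρ)`. -/
theorem stmt1 {K A : Type*} [Field K] [CharZero K] [AddCommGroup A] [Module K A]
    (μ : A →ₗ[K] A →ₗ[K] A →ₗ[K] A)
    (hpar : ∀ x₁ x₂ x₃ x₄ x₅ : A,
      μ (μ x₁ x₂ x₃) x₄ x₅ + μ x₁ (μ x₂ x₃ x₄) x₅ + μ x₁ x₂ (μ x₃ x₄ x₅) = 0)
    (ρ : A →ₗ[K] A)
    (hρ : ∀ x y z : A, ρ (μ x y z) = μ (ρ x) (ρ y) (ρ z)) :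
    ∀ x₁ x₂ x₃ x₄ x₅ : A,
      ρ (μ (ρ (μ x₁ x₂ x₃)) (ρ x₄) (ρ x₅)) + ρ (μ (ρ x₁) (ρ (μ x₂ x₃ x₄)) (ρ x₅))
        + ρ (μ (ρ x₁) (ρ x₂) (ρ (μ x₃ x₄ x₅))) = 0 := by
  intro x₁ x₂ x₃ x₄ x₅
  have h1 : ρ (μ (ρ (μ x₁ x₂ x₃)) (ρ x₄) (ρ x₅)) = ρ (ρ (μ (μ x₁ x₂ x₃) x₄ x₅)) := by
    simp only [hρ]
  have h2 : ρ (μ (ρ x₁) (ρ (μ x₂ x₃ x₄)) (ρ x₅)) = ρ (ρ (μ x₁ (μ x₂ x₃ x₄) x₅)) := by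
    simp only [hρ]
  have h3 : ρ (μ (ρ x₁) (ρ x₂) (ρ (μ x₃ x₄ x₅))) = ρ (ρ (μ x₁ x₂ (μ x₃ x₄ x₅))) := by
    simp only [hρ]
  rw [h1, h2, h3, ← ρ.map_add, ← ρ.map_add, ← ρ.map_add, ← ρ.map_add, hpar,
    ρ.map_zero, ρ.map_zero]
end

section
/- Let P be a 2-dimensional K-vector space with basis {e₁, e₂}, trilinear product μ with μ(e₁,e₁,e₁) = e₂ and all other basis products zero. For a, b ∈ K with a ≠ 0, the linear map ρ with ρ(e₁) = a·e₁ + b·e₂ and ρ(e₂) = a³·e₂ is an automorphism of (P, μ), i.e., ρ is bijective and ρ(μ(x,y,z)) = μ(ρ(x), ρ(y), ρ(z)) for all x, y, z ∈ P. -/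
/-- For `a ≠ 0`, the linear map `ρ(e₁) = a e₁ + b e₂`, `ρ(e₂) = a³ e₂` is an
automorphism of the partially associative ternary algebra with `μ(e₁,e₁,e₁) = e₂`. -/
theorem stmt4 {K : Type*} [Field K] [CharZero K]
    (μ : (K × K) →ₗ[K] (K × K) →ₗ[K] (K × K) →ₗ[K] (K × K))
    (e : Fin 2 → K × K) (he0 : e 0 = (1, 0)) (he1 : e 1 = (0, 1))
    (hμ : ∀ i j k : Fin 2, μ (e i) (e j) (e k) =
      if i = 0 ∧ j = 0 ∧ k = 0 then e 1 else 0)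
    (a b : K) (ha : a ≠ 0)
    (ρ : (K × K) →ₗ[K] (K × K))
    (hρ0 : ρ (e 0) = a • e 0 + b • e 1) (hρ1 : ρ (e 1) = a ^ 3 • e 1) :
    Function.Bijective ρ ∧ ∀ x y z : K × K, ρ (μ x y z) = μ (ρ x) (ρ y) (ρ z) := by
  have hdec : ∀ v : K × K, v = v.1 • e 0 + v.2 • e 1 := by
    intro v
    rw [he0, he1]
    ext <;> simp
  have hρ : ∀ v : K × K, ρ v = (a * v.1) • e 0 + (b * v.1 + a ^ 3 * v.2) • e 1 := by
    intro v
    conv_lhs => rw [hdec v]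
    rw [map_add, map_smul, map_smul, hρ0, hρ1, smul_add, smul_smul, smul_smul,
      smul_smul, add_smul, add_assoc]
    ring_nf
  have hμ' : ∀ x y z : K × K, μ x y z = (x.1 * y.1 * z.1) • e 1 := by
    intro x y z
    conv_lhs => rw [hdec x, hdec y, hdec z]
    simp only [map_add, map_smul, LinearMap.add_apply, LinearMap.smul_apply, hμ]
    norm_num
    rw [smul_smul, smul_smul]
    ring_nf
  constructor
  · have hinj : Function.Injective ρ := by
      rw [injective_iff_map_eq_zero]
      intro v hv
      rw [hρ v, he0, he1] at hv
      have h1 : a * v.1 = 0 := by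
        simpa using congrArg Prod.fst hv
      have hv1 : v.1 = 0 := by
        rcases mul_eq_zero.1 h1 with h | h
        · exact absurd h ha
        · exact h
      have h2 : b * v.1 + a ^ 3 * v.2 = 0 := by
        simpa using congrArg Prod.snd hv
      rw [hv1, mul_zero, zero_add, mul_eq_zero] at h2
      rcases h2 with h | h
      · exact absurd h (pow_ne_zero _ ha)
      · exact Prod.ext hv1 h
    exact ⟨hinj, LinearMap.injective_iff_surjective.1 hinj⟩
  · intro x y z
    rw [hμ' x y z, map_smul, hρ1, hμ' (ρ x) (ρ y) (ρ z), hρ x, hρ y, hρ z,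
      he0, he1]
    ext <;> simp <;> ring
end

section
/- Let T be a 2-dimensional vector space with basis {e₁, e₂} and trilinear product μ defined by μ(e₁,e₁,e₁)=e₁, μ(e₁,e₁,e₂)=μ(e₁,e₂,e₁)=μ(e₂,e₁,e₁)=e₂, μ(e₂,e₂,e₁)=μ(e₁,e₂,e₂)=μ(e₂,e₁,e₂)=e₁+e₂, μ(e₂,e₂,e₂)=e₁+2e₂. Then (T, μ) is a totally associative ternary algebra: μ(μ(x₁,x₂,x₃),x₄,x₅) = μ(x₁,μ(x₂,x₃,x₄),x₅) = μ(x₁,x₂,μ(x₃,x₄,x₅)) for all xᵢ ∈ T. -/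
/-- The 2-dimensional ternary algebra with the given multiplication table is
totally associative. -/
theorem stmt5 {K : Type*} [Field K] [CharZero K]
    (μ : (K × K) →ₗ[K] (K × K) →ₗ[K] (K × K) →ₗ[K] (K × K))
    (e : Fin 2 → K × K) (he0 : e 0 = (1, 0)) (he1 : e 1 = (0, 1))
    (h111 : μ (e 0) (e 0) (e 0) = e 0)
    (h112 : μ (e 0) (e 0) (e 1) = e 1)
    (h121 : μ (e 0) (e 1) (e 0) = e 1)
    (h211 : μ (e 1) (e 0) (e 0) = e 1)
    (h221 : μ (e 1) (e 1) (e 0) = e 0 + e 1)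
    (h122 : μ (e 0) (e 1) (e 1) = e 0 + e 1)
    (h212 : μ (e 1) (e 0) (e 1) = e 0 + e 1)
    (h222 : μ (e 1) (e 1) (e 1) = e 0 + (2 : K) • e 1) :
    ∀ x₁ x₂ x₃ x₄ x₅ : K × K,
      μ (μ x₁ x₂ x₃) x₄ x₅ = μ x₁ (μ x₂ x₃ x₄) x₅ ∧
      μ x₁ (μ x₂ x₃ x₄) x₅ = μ x₁ x₂ (μ x₃ x₄ x₅) := by
  have h : ∀ a b : K, (a, b) = a • e 0 + b • e 1 := by
    intro a b; rw [he0, he1]; ext <;> simp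
  rintro ⟨a₁, b₁⟩ ⟨a₂, b₂⟩ ⟨a₃, b₃⟩ ⟨a₄, b₄⟩ ⟨a₅, b₅⟩
  rw [h a₁ b₁, h a₂ b₂, h a₃ b₃, h a₄ b₄, h a₅ b₅]
  simp only [map_add, map_smul, LinearMap.add_apply, LinearMap.smul_apply,
    smul_add, smul_smul, h111, h112, h121, h211, h221, h122, h212, h222]
  constructor <;> module
end

section
/- Let A be a finite-dimensional K-vector space with trilinear map μ : A×A×A → A and linear maps α₁, α₂ : A → A. Then (A, μ, α₁, α₂) is a partially hom-associative ternary algebra if and only if the dual (A*, μ*, α₁*, α₂*) is a partially hom-coassociative ternary coalgebra, where μ* : A* → A*⊗A*⊗A* is defined by ⟨μ*(ξ), x⊗y⊗z⟩ = ⟨ξ, μ(x,y,z)⟩ and α* is the dual map. -/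
open TensorProduct Module

/-- `(Δ ⊗ α₁ ⊗ α₂)` reassociated to land in the right-nested 5-fold tensor power. -/
noncomputable def coassoc1 {K M : Type*} [Field K] [AddCommGroup M] [Module K M]
    (Δ : M →ₗ[K] M ⊗[K] (M ⊗[K] M)) (α₁ α₂ : M →ₗ[K] M) :
    (M ⊗[K] (M ⊗[K] M)) →ₗ[K] (M ⊗[K] (M ⊗[K] (M ⊗[K] (M ⊗[K] M)))) :=
  (TensorProduct.map (LinearMap.id : M →ₗ[K] M)
      (TensorProduct.assoc K M M (M ⊗[K] M)).toLinearMap).comp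
    ((TensorProduct.assoc K M (M ⊗[K] M) (M ⊗[K] M)).toLinearMap.comp
      (TensorProduct.map Δ (TensorProduct.map α₁ α₂)))

/-- `(α₁ ⊗ Δ ⊗ α₂)` reassociated to land in the right-nested 5-fold tensor power. -/
noncomputable def coassoc2 {K M : Type*} [Field K] [AddCommGroup M] [Module K M]
    (Δ : M →ₗ[K] M ⊗[K] (M ⊗[K] M)) (α₁ α₂ : M →ₗ[K] M) :
    (M ⊗[K] (M ⊗[K] M)) →ₗ[K] (M ⊗[K] (M ⊗[K] (M ⊗[K] (M ⊗[K] M)))) :=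
  (TensorProduct.map (LinearMap.id : M →ₗ[K] M)
      ((TensorProduct.map (LinearMap.id : M →ₗ[K] M)
          (TensorProduct.assoc K M M M).toLinearMap).comp
        (TensorProduct.assoc K M (M ⊗[K] M) M).toLinearMap)).comp
    (TensorProduct.map α₁ (TensorProduct.map Δ α₂))

/-- `(α₁ ⊗ α₂ ⊗ Δ)`. -/
noncomputable def coassoc3 {K M : Type*} [Field K] [AddCommGroup M] [Module K M]
    (Δ : M →ₗ[K] M ⊗[K] (M ⊗[K] M)) (α₁ α₂ : M →ₗ[K] M) :
    (M ⊗[K] (M ⊗[K] M)) →ₗ[K] (M ⊗[K] (M ⊗[K] (M ⊗[K] (M ⊗[K] M)))) :=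
  TensorProduct.map α₁ (TensorProduct.map α₂ Δ)

/-- The natural pairing `A* ⊗ A* ⊗ A* → (A ⊗ A ⊗ A)*`. -/
noncomputable def pair3 (K M : Type*) [Field K] [AddCommGroup M] [Module K M] :
    (Dual K M ⊗[K] (Dual K M ⊗[K] Dual K M)) →ₗ[K] Dual K (M ⊗[K] (M ⊗[K] M)) :=
  (TensorProduct.dualDistrib K M (M ⊗[K] M)).comp
    (TensorProduct.map (LinearMap.id : Dual K M →ₗ[K] Dual K M)
      (TensorProduct.dualDistrib K M M))

set_option maxHeartbeats 2000000
set_option synthInstance.maxHeartbeats 1000000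

/-- The natural pairing for the 5-fold tensor power. -/
noncomputable def pair5 (K M : Type*) [Field K] [AddCommGroup M] [Module K M] :
    (Dual K M ⊗[K] (Dual K M ⊗[K] (Dual K M ⊗[K] (Dual K M ⊗[K] Dual K M)))) →ₗ[K]
      Dual K (M ⊗[K] (M ⊗[K] (M ⊗[K] (M ⊗[K] M)))) :=
  (TensorProduct.dualDistrib K M (M ⊗[K] (M ⊗[K] (M ⊗[K] M)))).comp
    (TensorProduct.map (LinearMap.id : Dual K M →ₗ[K] Dual K M)
      ((TensorProduct.dualDistrib K M (M ⊗[K] (M ⊗[K] M))).comp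
        (TensorProduct.map (LinearMap.id : Dual K M →ₗ[K] Dual K M) (pair3 K M))))

section Aux

variable {K M : Type*} [Field K] [AddCommGroup M] [Module K M]

lemma pair3_tmul (f g h : Dual K M) (x y z : M) :
    pair3 K M (f ⊗ₜ[K] (g ⊗ₜ[K] h)) (x ⊗ₜ[K] (y ⊗ₜ[K] z)) = f x * (g y * h z) := by
  simp [pair3, TensorProduct.dualDistrib_apply]

lemma pair5_tmul (f₁ f₂ f₃ f₄ f₅ : Dual K M) (x₁ x₂ x₃ x₄ x₅ : M) :
    pair5 K M (f₁ ⊗ₜ[K] (f₂ ⊗ₜ[K] (f₃ ⊗ₜ[K] (f₄ ⊗ₜ[K] f₅))))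
      (x₁ ⊗ₜ[K] (x₂ ⊗ₜ[K] (x₃ ⊗ₜ[K] (x₄ ⊗ₜ[K] x₅)))) =
      f₁ x₁ * (f₂ x₂ * (f₃ x₃ * (f₄ x₄ * f₅ x₅))) := by
  simp [pair5, pair3, TensorProduct.dualDistrib_apply]

lemma natur1 (u : Dual K M ⊗[K] (Dual K M ⊗[K] Dual K M)) (g h : Dual K M) (x₁ x₂ x₃ x₄ x₅ : M) :
    pair5 K M ((TensorProduct.map (LinearMap.id : Dual K M →ₗ[K] Dual K M)
        (TensorProduct.assoc K (Dual K M) (Dual K M) (Dual K M ⊗[K] Dual K M)).toLinearMap)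
      ((TensorProduct.assoc K (Dual K M) (Dual K M ⊗[K] Dual K M)
          (Dual K M ⊗[K] Dual K M)).toLinearMap
        (u ⊗ₜ[K] (g ⊗ₜ[K] h)))) (x₁ ⊗ₜ[K] (x₂ ⊗ₜ[K] (x₃ ⊗ₜ[K] (x₄ ⊗ₜ[K] x₅)))) =
      pair3 K M u (x₁ ⊗ₜ[K] (x₂ ⊗ₜ[K] x₃)) * (g x₄ * h x₅) := by
  induction u with
  | zero => simp
  | add a b ha hb => simp only [add_tmul, map_add, LinearMap.add_apply, ha, hb, add_mul]
  | tmul f v =>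
    induction v with
    | zero => simp [tmul_zero, zero_tmul]
    | add a b ha hb =>
      simp only [tmul_add, add_tmul, map_add, LinearMap.add_apply, ha, hb, add_mul]
    | tmul a b =>
      simp [assoc_tmul, pair5_tmul, pair3_tmul, mul_assoc]

lemma natur2 (f : Dual K M) (u : Dual K M ⊗[K] (Dual K M ⊗[K] Dual K M)) (h : Dual K M)
    (x₁ x₂ x₃ x₄ x₅ : M) :
    pair5 K M (f ⊗ₜ[K]
        ((TensorProduct.map (LinearMap.id : Dual K M →ₗ[K] Dual K M)
            (TensorProduct.assoc K (Dual K M) (Dual K M) (Dual K M)).toLinearMap)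
          ((TensorProduct.assoc K (Dual K M) (Dual K M ⊗[K] Dual K M) (Dual K M)).toLinearMap
            (u ⊗ₜ[K] h)))) (x₁ ⊗ₜ[K] (x₂ ⊗ₜ[K] (x₃ ⊗ₜ[K] (x₄ ⊗ₜ[K] x₅)))) =
      f x₁ * (pair3 K M u (x₂ ⊗ₜ[K] (x₃ ⊗ₜ[K] x₄)) * h x₅) := by
  induction u with
  | zero => simp
  | add a b ha hb =>
    simp only [add_tmul, tmul_add, map_add, LinearMap.add_apply, ha, hb, add_mul, mul_add]
  | tmul g v =>
    induction v with
    | zero => simp [tmul_zero, zero_tmul]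
    | add a b ha hb =>
      simp only [tmul_add, add_tmul, map_add, LinearMap.add_apply, ha, hb, add_mul, mul_add]
    | tmul a b =>
      simp [assoc_tmul, pair5_tmul, pair3_tmul, mul_assoc]

lemma natur3 (f g : Dual K M) (u : Dual K M ⊗[K] (Dual K M ⊗[K] Dual K M))
    (x₁ x₂ x₃ x₄ x₅ : M) :
    pair5 K M (f ⊗ₜ[K] (g ⊗ₜ[K] u)) (x₁ ⊗ₜ[K] (x₂ ⊗ₜ[K] (x₃ ⊗ₜ[K] (x₄ ⊗ₜ[K] x₅)))) =
      f x₁ * (g x₂ * pair3 K M u (x₃ ⊗ₜ[K] (x₄ ⊗ₜ[K] x₅))) := by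
  induction u with
  | zero => simp
  | add a b ha hb =>
    simp only [tmul_add, map_add, LinearMap.add_apply, ha, hb, mul_add]
  | tmul a v =>
    induction v with
    | zero => simp [tmul_zero]
    | add c d hc hd =>
      simp only [tmul_add, map_add, LinearMap.add_apply, hc, hd, mul_add]
    | tmul b c =>
      simp [pair5_tmul, pair3_tmul]

end Aux

section Inj

variable {K M : Type*} [Field K] [AddCommGroup M] [Module K M] [FiniteDimensional K M]

noncomputable def E3 : (Dual K M ⊗[K] (Dual K M ⊗[K] Dual K M)) ≃ₗ[K] Dual K (M ⊗[K] (M ⊗[K] M)) :=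
  (TensorProduct.congr (LinearEquiv.refl K (Dual K M))
      (TensorProduct.dualDistribEquiv K M M)).trans
    (TensorProduct.dualDistribEquiv K M (M ⊗[K] M))

noncomputable def E5 :
    (Dual K M ⊗[K] (Dual K M ⊗[K] (Dual K M ⊗[K] (Dual K M ⊗[K] Dual K M)))) ≃ₗ[K]
      Dual K (M ⊗[K] (M ⊗[K] (M ⊗[K] (M ⊗[K] M)))) :=
  (TensorProduct.congr (LinearEquiv.refl K (Dual K M))
      ((TensorProduct.congr (LinearEquiv.refl K (Dual K M)) (E3 (K := K) (M := M))).trans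
        (TensorProduct.dualDistribEquiv K M (M ⊗[K] (M ⊗[K] M))))).trans
    (TensorProduct.dualDistribEquiv K M (M ⊗[K] (M ⊗[K] (M ⊗[K] M))))

lemma pair3_injective : Function.Injective (pair3 K M) := by
  have h : ⇑(pair3 K M) = ⇑(E3 (K := K) (M := M)) := rfl
  rw [h]; exact (E3).injective

lemma pair5_injective : Function.Injective (pair5 K M) := by
  have h : ⇑(pair5 K M) = ⇑(E5 (K := K) (M := M)) := rfl
  rw [h]; exact (E5).injective

end Inj

section Key

variable {K A : Type*} [Field K] [AddCommGroup A] [Module K A]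
  (μ : A →ₗ[K] A →ₗ[K] A →ₗ[K] A) (α₁ α₂ : A →ₗ[K] A)
  (μstar : Dual K A →ₗ[K] Dual K A ⊗[K] (Dual K A ⊗[K] Dual K A))
  (hμstar : ∀ (ξ : Dual K A) (x y z : A),
    pair3 K A (μstar ξ) (x ⊗ₜ[K] (y ⊗ₜ[K] z)) = ξ (μ x y z))

include hμstar

lemma key1 (t : Dual K A ⊗[K] (Dual K A ⊗[K] Dual K A)) (x₁ x₂ x₃ x₄ x₅ : A) :
    pair5 K A (coassoc1 μstar α₁.dualMap α₂.dualMap t)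
        (x₁ ⊗ₜ[K] (x₂ ⊗ₜ[K] (x₃ ⊗ₜ[K] (x₄ ⊗ₜ[K] x₅)))) =
      pair3 K A t ((μ x₁ x₂ x₃) ⊗ₜ[K] ((α₁ x₄) ⊗ₜ[K] (α₂ x₅))) := by
  induction t with
  | zero => simp
  | add a b ha hb => simp only [map_add, LinearMap.add_apply, ha, hb]
  | tmul f v =>
    induction v with
    | zero => simp [tmul_zero]
    | add a b ha hb =>
      simp only [tmul_add, map_add, LinearMap.add_apply, ha, hb]
    | tmul g h =>
      simp only [coassoc1, LinearMap.comp_apply, map_tmul]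
      rw [natur1, hμstar, pair3_tmul]
      simp [LinearMap.dualMap_apply]

lemma key2 (t : Dual K A ⊗[K] (Dual K A ⊗[K] Dual K A)) (x₁ x₂ x₃ x₄ x₅ : A) :
    pair5 K A (coassoc2 μstar α₁.dualMap α₂.dualMap t)
        (x₁ ⊗ₜ[K] (x₂ ⊗ₜ[K] (x₃ ⊗ₜ[K] (x₄ ⊗ₜ[K] x₅)))) =
      pair3 K A t ((α₁ x₁) ⊗ₜ[K] ((μ x₂ x₃ x₄) ⊗ₜ[K] (α₂ x₅))) := by
  induction t with
  | zero => simp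
  | add a b ha hb => simp only [map_add, LinearMap.add_apply, ha, hb]
  | tmul f v =>
    induction v with
    | zero => simp [tmul_zero]
    | add a b ha hb =>
      simp only [tmul_add, map_add, LinearMap.add_apply, ha, hb]
    | tmul g h =>
      simp only [coassoc2, LinearMap.comp_apply, map_tmul, LinearMap.id_apply]
      rw [natur2, hμstar, pair3_tmul]
      simp [LinearMap.dualMap_apply]

lemma key3 (t : Dual K A ⊗[K] (Dual K A ⊗[K] Dual K A)) (x₁ x₂ x₃ x₄ x₅ : A) :
    pair5 K A (coassoc3 μstar α₁.dualMap α₂.dualMap t)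
        (x₁ ⊗ₜ[K] (x₂ ⊗ₜ[K] (x₃ ⊗ₜ[K] (x₄ ⊗ₜ[K] x₅)))) =
      pair3 K A t ((α₁ x₁) ⊗ₜ[K] ((α₂ x₂) ⊗ₜ[K] (μ x₃ x₄ x₅))) := by
  induction t with
  | zero => simp
  | add a b ha hb => simp only [map_add, LinearMap.add_apply, ha, hb]
  | tmul f v =>
    induction v with
    | zero => simp [tmul_zero]
    | add a b ha hb =>
      simp only [tmul_add, map_add, LinearMap.add_apply, ha, hb]
    | tmul g h =>
      simp only [coassoc3, map_tmul]
      rw [natur3, hμstar, pair3_tmul]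
      simp [LinearMap.dualMap_apply]

end Key

/-- `(A, μ, α₁, α₂)` is a partially hom-associative ternary algebra iff its dual
`(A*, μ*, α₁*, α₂*)` is a partially hom-coassociative ternary coalgebra. -/
theorem stmt7 {K A : Type*} [Field K] [AddCommGroup A] [Module K A]
    [FiniteDimensional K A]
    (μ : A →ₗ[K] A →ₗ[K] A →ₗ[K] A) (α₁ α₂ : A →ₗ[K] A)
    (μstar : Dual K A →ₗ[K] Dual K A ⊗[K] (Dual K A ⊗[K] Dual K A))
    (hμstar : ∀ (ξ : Dual K A) (x y z : A),
      pair3 K A (μstar ξ) (x ⊗ₜ[K] (y ⊗ₜ[K] z)) = ξ (μ x y z)) :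
    (∀ x₁ x₂ x₃ x₄ x₅ : A,
      μ (μ x₁ x₂ x₃) (α₁ x₄) (α₂ x₅) + μ (α₁ x₁) (μ x₂ x₃ x₄) (α₂ x₅)
        + μ (α₁ x₁) (α₂ x₂) (μ x₃ x₄ x₅) = 0) ↔
    (coassoc1 μstar α₁.dualMap α₂.dualMap + coassoc2 μstar α₁.dualMap α₂.dualMap
      + coassoc3 μstar α₁.dualMap α₂.dualMap).comp μstar = 0 := by
  constructor
  · intro H
    apply LinearMap.ext
    intro ξ
    simp only [LinearMap.comp_apply, LinearMap.zero_apply]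
    apply pair5_injective
    rw [map_zero]
    have ext5 : ∀ F : (A ⊗[K] (A ⊗[K] (A ⊗[K] (A ⊗[K] A)))) →ₗ[K] K,
        (∀ x₁ x₂ x₃ x₄ x₅ : A, F (x₁ ⊗ₜ[K] (x₂ ⊗ₜ[K] (x₃ ⊗ₜ[K] (x₄ ⊗ₜ[K] x₅)))) = 0) → F = 0 := by
      intro F hF
      ext x₁ x₂ x₃ x₄ x₅
      exact hF x₁ x₂ x₃ x₄ x₅
    apply ext5
    intro x₁ x₂ x₃ x₄ x₅
    simp only [LinearMap.add_apply, map_add]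
    rw [key1 μ α₁ α₂ μstar hμstar, key2 μ α₁ α₂ μstar hμstar, key3 μ α₁ α₂ μstar hμstar,
      hμstar, hμstar, hμstar, ← map_add, ← map_add, H, map_zero]
  · intro H x₁ x₂ x₃ x₄ x₅
    rw [← Module.forall_dual_apply_eq_zero_iff K]
    intro ξ
    have h0 : (coassoc1 μstar α₁.dualMap α₂.dualMap + coassoc2 μstar α₁.dualMap α₂.dualMap
        + coassoc3 μstar α₁.dualMap α₂.dualMap) (μstar ξ) = 0 := by
      rw [← LinearMap.comp_apply, H, LinearMap.zero_apply]
    have e : pair5 K A ((coassoc1 μstar α₁.dualMap α₂.dualMap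
          + coassoc2 μstar α₁.dualMap α₂.dualMap
          + coassoc3 μstar α₁.dualMap α₂.dualMap) (μstar ξ))
        (x₁ ⊗ₜ[K] (x₂ ⊗ₜ[K] (x₃ ⊗ₜ[K] (x₄ ⊗ₜ[K] x₅)))) =
        ξ (μ (μ x₁ x₂ x₃) (α₁ x₄) (α₂ x₅) + μ (α₁ x₁) (μ x₂ x₃ x₄) (α₂ x₅)
          + μ (α₁ x₁) (α₂ x₂) (μ x₃ x₄ x₅)) := by
      simp only [LinearMap.add_apply, map_add]
      rw [key1 μ α₁ α₂ μstar hμstar, key2 μ α₁ α₂ μstar hμstar, key3 μ α₁ α₂ μstar hμstar,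
        hμstar, hμstar, hμstar]
    rw [h0] at e
    simpa using e.symm
end

section
/- Let (A, μ, α₁, α₂) be a totally hom-associative ternary algebra and (V, β₁, β₂) a bihom-module with trilinear actions L : A×A×V → V, M : A×V×A → V, R : V×A×A → V. Define on A ⊕ V the ternary product τ(x+a, y+b, z+c) = μ(x,y,z) + L(x,y)(c) + M(x,z)(b) + R(y,z)(a). Then (A⊕V, τ, α₁⊕β₁, α₂⊕β₂) is a totally hom-associative ternary algebra if and only if (L, M, R, β₁, β₂, V) satisfies the quasi-trimodule conditions (Eqs. for L, R, M compatibility): L(α₁a,α₂b)(L(c,d)v) = L(μ(a,b,c),α₁d)β₂v = L(α₁a,μ(b,c,d))β₂v; R(α₁c,α₂d)(R(a,b)v) = R(α₂a,μ(b,c,d))β₁v = R(μ(a,b,c),α₂d)β₁v; M(α₁a,α₂d)(L(b,c)v) = L(α₁a,α₂b)(M(c,d)v) = M(μ(a,b,c),α₂d)β₁v; M(α₁a,α₂d)(R(b,c)v) = R(α₁c,α₂d)(M(a,b)v) = M(α₁a,μ(b,c,d))β₂v; R(α₁c,α₂d)(L(a,b)v) = L(α₁a,α₂b)(R(c,d)v)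 = M(α₁a,α₂d)(M(b,c)v). -/
section

variable {K A V : Type*} [Field K] [AddCommGroup A] [Module K A]
  [AddCommGroup V] [Module K V]

/-- The ternary product on `A ⊕ V` built from `μ` and the actions `L, M, R`:
`τ(x+a, y+b, z+c) = μ(x,y,z) + L(x,y)(c) + M(x,z)(b) + R(y,z)(a)`. -/
def semidirectTernary (μ : A →ₗ[K] A →ₗ[K] A →ₗ[K] A)
    (L M R : A →ₗ[K] A →ₗ[K] V →ₗ[K] V) :
    A × V → A × V → A × V → A × V :=
  fun p q r => (μ p.1 q.1 r.1, L p.1 q.1 r.2 + M p.1 r.1 q.2 + R q.1 r.1 p.2)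

/-- The direct sum `α ⊕ β` of structure maps. -/
def sumMap (α : A →ₗ[K] A) (β : V →ₗ[K] V) : A × V → A × V :=
  fun p => (α p.1, β p.2)

/-- `(L, M, R, β₁, β₂, V)` is a quasi-trimodule of the totally hom-associative
ternary algebra `(A, μ, α₁, α₂)` iff `A ⊕ V` with the semidirect ternary product
is totally hom-associative. -/
theorem stmt11 (μ : A →ₗ[K] A →ₗ[K] A →ₗ[K] A) (α₁ α₂ : A →ₗ[K] A)
    (β₁ β₂ : V →ₗ[K] V) (L M R : A →ₗ[K] A →ₗ[K] V →ₗ[K] V)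
    (htot : ∀ x₁ x₂ x₃ x₄ x₅ : A,
      μ (μ x₁ x₂ x₃) (α₁ x₄) (α₂ x₅) = μ (α₁ x₁) (μ x₂ x₃ x₄) (α₂ x₅) ∧
      μ (α₁ x₁) (μ x₂ x₃ x₄) (α₂ x₅) = μ (α₁ x₁) (α₂ x₂) (μ x₃ x₄ x₅)) :
    (∀ p₁ p₂ p₃ p₄ p₅ : A × V,
      semidirectTernary μ L M R (semidirectTernary μ L M R p₁ p₂ p₃)
          (sumMap α₁ β₁ p₄) (sumMap α₂ β₂ p₅)
        = semidirectTernary μ L M R (sumMap α₁ β₁ p₁)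
            (semidirectTernary μ L M R p₂ p₃ p₄) (sumMap α₂ β₂ p₅) ∧
      semidirectTernary μ L M R (sumMap α₁ β₁ p₁)
          (semidirectTernary μ L M R p₂ p₃ p₄) (sumMap α₂ β₂ p₅)
        = semidirectTernary μ L M R (sumMap α₁ β₁ p₁) (sumMap α₂ β₂ p₂)
            (semidirectTernary μ L M R p₃ p₄ p₅)) ↔
    (∀ a b c d : A, ∀ v : V,
      (L (α₁ a) (α₂ b) (L c d v) = L (μ a b c) (α₁ d) (β₂ v) ∧
        L (μ a b c) (α₁ d) (β₂ v) = L (α₁ a) (μ b c d) (β₂ v)) ∧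
      (R (α₁ c) (α₂ d) (R a b v) = R (α₂ a) (μ b c d) (β₁ v) ∧
        R (α₂ a) (μ b c d) (β₁ v) = R (μ a b c) (α₂ d) (β₁ v)) ∧
      (M (α₁ a) (α₂ d) (L b c v) = L (α₁ a) (α₂ b) (M c d v) ∧
        L (α₁ a) (α₂ b) (M c d v) = M (μ a b c) (α₂ d) (β₁ v)) ∧
      (M (α₁ a) (α₂ d) (R b c v) = R (α₁ c) (α₂ d) (M a b v) ∧
        R (α₁ c) (α₂ d) (M a b v) = M (α₁ a) (μ b c d) (β₂ v)) ∧
      (R (α₁ c) (α₂ d) (L a b v) = L (α₁ a) (α₂ b) (R c d v) ∧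
        L (α₁ a) (α₂ b) (R c d v) = M (α₁ a) (α₂ d) (M b c v))) := by
  constructor
  · intro h a b c d v
    have h5 := h (a, 0) (b, 0) (c, 0) (d, 0) (0, v)
    have h1 := h (0, v) (a, 0) (b, 0) (c, 0) (d, 0)
    have h4 := h (a, 0) (b, 0) (c, 0) (0, v) (d, 0)
    have h2 := h (a, 0) (0, v) (b, 0) (c, 0) (d, 0)
    have h3 := h (a, 0) (b, 0) (0, v) (c, 0) (d, 0)
    simp only [semidirectTernary, sumMap, Prod.mk.injEq, map_zero,
      LinearMap.zero_apply, add_zero, zero_add, LinearMap.map_zero] at h1 h2 h3 h4 h5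
    exact ⟨⟨h5.2.2.symm.trans h5.1.2.symm, h5.1.2⟩,
      ⟨h1.1.2.trans h1.2.2, h1.2.2.symm⟩,
      ⟨h4.2.2, h4.2.2.symm.trans h4.1.2.symm⟩,
      ⟨h2.1.2.symm, h2.1.2.trans h2.2.2⟩,
      ⟨h3.1.2.trans h3.2.2, h3.2.2.symm⟩⟩
  · intro h p₁ p₂ p₃ p₄ p₅
    obtain ⟨x₁, v₁⟩ := p₁; obtain ⟨x₂, v₂⟩ := p₂; obtain ⟨x₃, v₃⟩ := p₃
    obtain ⟨x₄, v₄⟩ := p₄; obtain ⟨x₅, v₅⟩ := p₅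
    simp only [semidirectTernary, sumMap, Prod.mk.injEq, map_add]
    refine ⟨⟨(htot x₁ x₂ x₃ x₄ x₅).1, ?_⟩, ⟨(htot x₁ x₂ x₃ x₄ x₅).2, ?_⟩⟩
    · rw [(h x₁ x₂ x₃ x₄ v₅).1.2,
        ← ((h x₁ x₂ x₃ x₅ v₄).2.2.1.1.trans (h x₁ x₂ x₃ x₅ v₄).2.2.1.2),
        (h x₁ x₂ x₄ x₅ v₃).2.2.2.2.1.trans (h x₁ x₂ x₄ x₅ v₃).2.2.2.2.2,
        ← (h x₁ x₃ x₄ x₅ v₂).2.2.2.1.1,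
        (h x₂ x₃ x₄ x₅ v₁).2.1.1.trans (h x₂ x₃ x₄ x₅ v₁).2.1.2]
      abel
    · rw [← ((h x₁ x₂ x₃ x₄ v₅).1.1.trans (h x₁ x₂ x₃ x₄ v₅).1.2),
        (h x₁ x₂ x₃ x₅ v₄).2.2.1.1,
        ← (h x₁ x₂ x₄ x₅ v₃).2.2.2.2.2,
        (h x₁ x₃ x₄ x₅ v₂).2.2.2.1.1.trans (h x₁ x₃ x₄ x₅ v₂).2.2.2.1.2,
        ← (h x₂ x₃ x₄ x₅ v₁).2.1.2]
      abel

end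
end

section
/- Let P = K² with basis {e₁, e₂}, ternary product μ(e₁,e₁,e₁) = e₂ (all other basis products zero), coproduct Δ(e₁) = e₂⊗e₂⊗e₂, Δ(e₂) = 0, and linear map ρ with ρ(e₁) = e₁ + e₂, ρ(e₂) = e₂, with α₁ = α₂ = ρ. Then (P, Δ, ρ, ρ) is a partially hom-coassociative ternary coalgebra: (Δ⊗ρ⊗ρ + ρ⊗Δ⊗ρ + ρ⊗ρ⊗Δ) ∘ Δ = 0. -/
open TensorProduct Module
set_option synthInstance.maxHeartbeats 1000000
set_option maxHeartbeats 1000000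

/-- The coproduct `Δ(e₁) = e₂⊗e₂⊗e₂`, `Δ(e₂) = 0` with `ρ(e₁) = e₁ + e₂`,
`ρ(e₂) = e₂` is a partially hom-coassociative ternary coalgebra on `K²`. -/
theorem stmt14 {K : Type*} [Field K] [CharZero K]
    (Δ : (K × K) →ₗ[K] (K × K) ⊗[K] ((K × K) ⊗[K] (K × K)))
    (e : Fin 2 → K × K) (he0 : e 0 = (1, 0)) (he1 : e 1 = (0, 1))
    (hΔ0 : Δ (e 0) = e 1 ⊗ₜ[K] (e 1 ⊗ₜ[K] e 1)) (hΔ1 : Δ (e 1) = 0)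
    (ρ : (K × K) →ₗ[K] (K × K))
    (hρ0 : ρ (e 0) = e 0 + e 1) (hρ1 : ρ (e 1) = e 1) :
    (coassoc1 Δ ρ ρ + coassoc2 Δ ρ ρ + coassoc3 Δ ρ ρ).comp Δ = 0 := by
  apply LinearMap.ext; intro x
  have hx : x = x.1 • e 0 + x.2 • e 1 := by
    simp [he0, he1, Prod.ext_iff]
  rw [LinearMap.comp_apply, hx, map_add, map_smul, map_smul, hΔ0, hΔ1]
  simp [coassoc1, coassoc2, coassoc3, hΔ1, hρ1]
end

section
/- Let P = K² with trilinear product μ(e₁,e₁,e₁) = e₂ (all other basis products zero), coproduct Δ(e₁) = e₂⊗e₂⊗e₂, Δ(e₂) = 0, and ρ(e₁) = e₁ + e₂, ρ(e₂) = e₂. Then the compatibility condition Δ(μ(x,y,z)) = (L(ρx,ρy)⊗ρ⊗ρ)Δ(z) + (ρ⊗M(ρx,ρz)⊗ρ)Δ(y) + (ρ⊗ρ⊗R(ρy,ρz))Δ(x) holds for all x, y, z ∈ P, where L(x,y)(w)=μ(x,y,w), M(x,y)(w)=μ(x,w,y), R(x,y)(w)=μ(w,x,y); i.e., (P, μ,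 Δ, ρ, ρ) is a partially hom-associative ternary infinitesimal bialgebra. -/
open TensorProduct Module

/-- `(P, μ, Δ, ρ, ρ)` with `μ(e₁,e₁,e₁) = e₂`, `Δ(e₁) = e₂⊗e₂⊗e₂`, `Δ(e₂) = 0`,
`ρ(e₁) = e₁+e₂`, `ρ(e₂) = e₂` is a partially hom-associative ternary infinitesimal
bialgebra; in particular the compatibility condition holds. -/
theorem stmt15 {K : Type*} [Field K] [CharZero K]
    (μ : (K × K) →ₗ[K] (K × K) →ₗ[K] (K × K) →ₗ[K] (K × K))
    (Δ : (K × K) →ₗ[K] (K × K) ⊗[K] ((K × K) ⊗[K] (K × K)))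
    (e : Fin 2 → K × K) (he0 : e 0 = (1, 0)) (he1 : e 1 = (0, 1))
    (hμ : ∀ i j k : Fin 2, μ (e i) (e j) (e k) =
      if i = 0 ∧ j = 0 ∧ k = 0 then e 1 else 0)
    (hΔ0 : Δ (e 0) = e 1 ⊗ₜ[K] (e 1 ⊗ₜ[K] e 1)) (hΔ1 : Δ (e 1) = 0)
    (ρ : (K × K) →ₗ[K] (K × K))
    (hρ0 : ρ (e 0) = e 0 + e 1) (hρ1 : ρ (e 1) = e 1) :
    (∀ x₁ x₂ x₃ x₄ x₅ : K × K,
      μ (μ x₁ x₂ x₃) (ρ x₄) (ρ x₅) + μ (ρ x₁) (μ x₂ x₃ x₄) (ρ x₅)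
        + μ (ρ x₁) (ρ x₂) (μ x₃ x₄ x₅) = 0) ∧
    (coassoc1 Δ ρ ρ + coassoc2 Δ ρ ρ + coassoc3 Δ ρ ρ).comp Δ = 0 ∧
    (∀ x y z : K × K,
      Δ (μ x y z)
        = TensorProduct.map (μ (ρ x) (ρ y)) (TensorProduct.map ρ ρ) (Δ z)
          + TensorProduct.map ρ (TensorProduct.map ((μ (ρ x)).flip (ρ z)) ρ) (Δ y)
          + TensorProduct.map ρ (TensorProduct.map ρ ((μ.flip (ρ y)).flip (ρ z))) (Δ x)) := by

  have hx : ∀ x : K × K, x = x.1 • e 0 + x.2 • e 1 := by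
    intro x; rw [he0, he1]
    simp [Prod.ext_iff]
  have L3 : ∀ a b : K × K, μ (e 1) a b = 0 := by
    intro a b
    rw [hx a, hx b]
    simp [hμ]
  have L2 : ∀ a b : K × K, μ a (e 1) b = 0 := by
    intro a b
    rw [hx a, hx b]
    simp [hμ]
  have L1 : ∀ a b : K × K, μ a b (e 1) = 0 := by
    intro a b
    rw [hx a, hx b]
    simp [hμ]
  have Lμ : ∀ x y z : K × K, μ x y z = (x.1 * y.1 * z.1) • e 1 := by
    intro x y z
    conv_lhs => rw [hx x, hx y, hx z]
    simp [hμ, smul_smul, mul_assoc]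
  have LΔ : ∀ x : K × K, Δ x = x.1 • (e 1 ⊗ₜ[K] (e 1 ⊗ₜ[K] e 1)) := by
    intro x
    conv_lhs => rw [hx x]
    simp [hΔ0, hΔ1]
  refine ⟨?_, ?_, ?_⟩
  · intro x₁ x₂ x₃ x₄ x₅
    rw [Lμ x₁ x₂ x₃, Lμ x₂ x₃ x₄, Lμ x₃ x₄ x₅]
    simp [L1, L2, L3]
  · apply LinearMap.ext
    intro x
    rw [LinearMap.comp_apply, LΔ x]
    simp only [map_smul, LinearMap.add_apply, LinearMap.zero_apply]
    rw [coassoc1, coassoc2, coassoc3]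
    set_option synthInstance.maxHeartbeats 1000000 in
    set_option maxHeartbeats 1000000 in
    simp [TensorProduct.map_tmul, hΔ1]
  · intro x y z
    rw [Lμ x y z, map_smul, hΔ1, LΔ x, LΔ y, LΔ z]
    simp only [map_smul, TensorProduct.map_tmul, LinearMap.flip_apply,
      L1 (ρ x) (ρ y), L1, L2, L3]
    simp
end

section
/- Let T = K² with the totally associative ternary product μ (μ(e₁,e₁,e₁)=e₁, μ(e₁,e₁,e₂)=μ(e₁,e₂,e₁)=μ(e₂,e₁,e₁)=e₂, μ(e₂,e₂,e₁)=μ(e₁,e₂,e₂)=μ(e₂,e₁,e₂)=e₁+e₂, μ(e₂,e₂,e₂)=e₁+2e₂) and automorphism ρ(e₁)=e₁, ρ(e₂)=e₁−e₂. The twisted product μ̃ = ρ∘μ (so μ̃(e₁,e₁,e₁)=e₁, μ̃(e₁,e₁,e₂)=e₁−e₂, etc.) gives a totally hom-associative ternary algebra (T, μ̃, ρ, ρ) that is NOT totally associative: there exist x₁,...,x₅ ∈ T with μ̃(μ̃(x₁,x₂,x₃),x₄,x₅) ≠ μ̃(x₁,μ̃(x₂,x₃,x₄),x₅). -/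
/-- Twisting the 2-dimensional totally associative ternary algebra by the
automorphism `ρ(e₁)=e₁`, `ρ(e₂)=e₁-e₂` gives a totally hom-associative ternary
algebra which is NOT totally associative. -/
theorem stmt19 {K : Type*} [Field K] [CharZero K]
    (μ : (K × K) →ₗ[K] (K × K) →ₗ[K] (K × K) →ₗ[K] (K × K))
    (e : Fin 2 → K × K) (he0 : e 0 = (1, 0)) (he1 : e 1 = (0, 1))
    (h111 : μ (e 0) (e 0) (e 0) = e 0)
    (h112 : μ (e 0) (e 0) (e 1) = e 1)
    (h121 : μ (e 0) (e 1) (e 0) = e 1)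
    (h211 : μ (e 1) (e 0) (e 0) = e 1)
    (h221 : μ (e 1) (e 1) (e 0) = e 0 + e 1)
    (h122 : μ (e 0) (e 1) (e 1) = e 0 + e 1)
    (h212 : μ (e 1) (e 0) (e 1) = e 0 + e 1)
    (h222 : μ (e 1) (e 1) (e 1) = e 0 + (2 : K) • e 1)
    (ρ : (K × K) →ₗ[K] (K × K))
    (hρ0 : ρ (e 0) = e 0) (hρ1 : ρ (e 1) = e 0 - e 1)
    (μt : (K × K) → (K × K) → (K × K) → (K × K))
    (hμt : ∀ x y z : K × K, μt x y z = ρ (μ x y z)) :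
    (∀ x₁ x₂ x₃ x₄ x₅ : K × K,
      μt (μt x₁ x₂ x₃) (ρ x₄) (ρ x₅) = μt (ρ x₁) (μt x₂ x₃ x₄) (ρ x₅) ∧
      μt (ρ x₁) (μt x₂ x₃ x₄) (ρ x₅) = μt (ρ x₁) (ρ x₂) (μt x₃ x₄ x₅)) ∧
    (∃ x₁ x₂ x₃ x₄ x₅ : K × K,
      μt (μt x₁ x₂ x₃) x₄ x₅ ≠ μt x₁ (μt x₂ x₃ x₄) x₅) := by
  have hb : ∀ x : K × K, x = x.1 • e 0 + x.2 • e 1 := by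
    intro x
    rw [he0, he1]
    ext <;> simp
  have hρ : ∀ x : K × K, ρ x = (x.1 + x.2, -x.2) := by
    intro x
    rw [hb x, map_add, map_smul, map_smul, hρ0, hρ1, he0, he1]
    ext <;> simp
  have hμ : ∀ x y z : K × K, μ x y z =
      (x.1 * y.1 * z.1 + x.1 * y.2 * z.2 + x.2 * y.1 * z.2 + x.2 * y.2 * z.1
        + x.2 * y.2 * z.2,
       x.1 * y.1 * z.2 + x.1 * y.2 * z.1 + x.2 * y.1 * z.1 + x.1 * y.2 * z.2
        + x.2 * y.1 * z.2 + x.2 * y.2 * z.1 + 2 * (x.2 * y.2 * z.2)) := by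
    intro x y z
    conv_lhs => rw [hb x, hb y, hb z]
    simp only [map_add, map_smul, LinearMap.add_apply, LinearMap.smul_apply,
      h111, h112, h121, h211, h221, h122, h212, h222]
    rw [he0, he1]
    ext <;> simp <;> ring
  constructor
  · intro x₁ x₂ x₃ x₄ x₅
    constructor <;>
    · simp only [hμt, hμ, hρ]
      ext <;> dsimp only <;> ring
  · refine ⟨e 0, e 1, e 1, e 1, e 0, ?_⟩
    simp only [hμt, hμ, hρ, he0, he1]
    intro h
    have := congrArg Prod.snd h
    norm_num at this
end
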